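/- Let G be a quasi-acyclic 2-path-bounded oriented graph without multiple edges and triangles, and let R be any complete system of relations for G. Let R_L ⊆ R be the subset of relations in which every edge occurring on either side is a loop, and let R_N ⊆ R be the subset of relations in which both sides contain at least one non-loop edge. Then R = R_L ⊔ R_N, i.e., every relation of R lies in exactly one of R_L, R_N. -/

import Mathlib

/-- An oriented graph: finite nonempty sets of vertices and edges with
origin and tail maps. -/
structure OrientedGraph where
  V : Type
  E : Type
  [fintypeV : Fintype V]
  [fintypeE : Fintype E]
  [nonemptyV : Nonempty V]
  [nonemptyE : Nonempty E]
  o : E → V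
  t : E → V

attribute [instance] OrientedGraph.fintypeV OrientedGraph.fintypeE
  OrientedGraph.nonemptyV OrientedGraph.nonemptyE

namespace OrientedGraph

variable (G : OrientedGraph)

/-- `G.IsPath p u v` : the edge sequence `p` is a path from `u` to `v`
(consecutive edges are composable; paths of length 0 at any vertex are allowed). -/
def IsPath (p : List G.E) (u v : G.V) : Prop :=
  List.Chain' (fun e f => G.t e = G.o f) p ∧
  ((p = [] ∧ u = v) ∨
    ∃ h : p ≠ [], u = G.o (p.head h) ∧ v = G.t (p.getLast h))

/-- The label of an edge sequence: the product of the labels of its edges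
(the empty sequence maps to `1`). -/
def labelProd {M : Type} [Monoid M] (l : G.E → M) (s : List G.E) : M :=
  (s.map l).prod

/-- The diagram `(G, l)` is commutative: any two paths with the same origin and
the same tail have equal labels. -/
def IsCommutative {M : Type} [Monoid M] (l : G.E → M) : Prop :=
  ∀ (u v : G.V) (p₁ p₂ : List G.E),
    G.IsPath p₁ u v → G.IsPath p₂ u v → G.labelProd l p₁ = G.labelProd l p₂

/-- A complete system of relations for `G`: for every monoid `M` and every
labeling `l : E → M`, the diagram `(G, l)` is commutative iff all relations hold. -/
def IsComplete (R : Finset (List G.E × List G.E)) : Prop :=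
  ∀ (M : Type) [Monoid M], ∀ l : G.E → M,
    G.IsCommutative l ↔ ∀ r ∈ R, G.labelProd l r.1 = G.labelProd l r.2

/-- A minimal complete system of relations: no proper subset is complete. -/
def IsMinimalComplete (R : Finset (List G.E × List G.E)) : Prop :=
  G.IsComplete R ∧ ∀ R' : Finset (List G.E × List G.E), R' ⊂ R → ¬ G.IsComplete R'

/-- The commutativity rank `η(G)`: the minimal cardinality of a complete
system of relations for `G`. -/
noncomputable def eta : ℕ :=
  sInf {n : ℕ | ∃ R : Finset (List G.E × List G.E), G.IsComplete R ∧ R.card = n}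

/-- `S'` is obtained from `S` by one multiplication. -/
def MulStep (S S' : Set (List G.E)) : Prop :=
  ∃ s ∈ S, ∃ s' ∈ S, S' = S ∪ {s ++ s'}

/-- `G.mCost S S'` : the minimal number of multiplications needed to obtain `S'`
from `S` (`⊤` if impossible). -/
noncomputable def mCost (S S' : Set (List G.E)) : ℕ∞ :=
  sInf {k : ℕ∞ | ∃ n : ℕ, k = n ∧ ∃ f : ℕ → Set (List G.E),
    f 0 = S ∧ f n = S' ∧ ∀ i < n, G.MulStep (f i) (f (i + 1))}

/-- `S_R`: the set of all edge sequences appearing in the relations of `R`. -/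
def relSet (R : Finset (List G.E × List G.E)) : Set (List G.E) :=
  {s | ∃ r ∈ R, s = r.1 ∨ s = r.2}

/-- `ℰ`: the empty sequence together with all one-edge sequences. -/
def baseSet : Set (List G.E) :=
  {s | s = [] ∨ ∃ e : G.E, s = [e]}

/-- `m(R)`: the minimal number of multiplications needed to build all sequences
appearing in `R`, starting from `ℰ`. -/
noncomputable def mRel (R : Finset (List G.E × List G.E)) : ℕ∞ :=
  sInf {k : ℕ∞ | ∃ S : Set (List G.E), G.relSet R ⊆ S ∧ k = G.mCost G.baseSet S}

/-- The multiplication rank `ν(G)`. -/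
noncomputable def nu : ℕ∞ :=
  sInf {k : ℕ∞ | ∃ R : Finset (List G.E × List G.E), G.IsComplete R ∧ k = G.mRel R}

/-- A 4-tuple of edges `(a, b, c, d)` forms a rhomboid. -/
def IsRhomboid (r : G.E × G.E × G.E × G.E) : Prop :=
  G.o r.1 = G.o r.2.2.1 ∧ G.t r.2.1 = G.t r.2.2.2 ∧
  G.t r.1 = G.o r.2.1 ∧ G.t r.2.2.1 = G.o r.2.2.2 ∧
  G.o r.1 ≠ G.t r.1 ∧ G.o r.1 ≠ G.o r.2.2.2 ∧ G.o r.1 ≠ G.t r.2.2.2 ∧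
  G.t r.1 ≠ G.o r.2.2.2 ∧ G.t r.1 ≠ G.t r.2.2.2 ∧ G.o r.2.2.2 ≠ G.t r.2.2.2

/-- Two rhomboids `(a, b, c, d)` and `(a', b', c', d')` are disjoint. -/
def RhDisjoint (r r' : G.E × G.E × G.E × G.E) : Prop :=
  (r.1 ≠ r'.1 ∨ r.2.1 ≠ r'.2.1) ∧
  (r.1 ≠ r'.2.2.1 ∨ r.2.1 ≠ r'.2.2.2) ∧
  (r.2.2.1 ≠ r'.2.2.1 ∨ r.2.2.2 ≠ r'.2.2.2) ∧
  (r.2.2.1 ≠ r'.1 ∨ r.2.2.2 ≠ r'.2.1)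

/-- `𝔯𝔥(G)`: the maximal cardinality of a family of pairwise disjoint rhomboids in `G`. -/
noncomputable def rhNum : ℕ :=
  sSup {n : ℕ | ∃ F : Finset (G.E × G.E × G.E × G.E),
    (∀ r ∈ F, G.IsRhomboid r) ∧
    (∀ r ∈ F, ∀ r' ∈ F, r ≠ r' → G.RhDisjoint r r') ∧ F.card = n}

/-- `𝔏(G)`: the number of loops of `G`. -/
noncomputable def loopCount : ℕ :=
  Nat.card {e : G.E // G.o e = G.t e}

/-- `G` is quasi-acyclic: no directed cycle visiting two or more distinct vertices. -/
def QuasiAcyclic : Prop :=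
  ∀ u v : G.V, u ≠ v →
    ∀ p q : List G.E, G.IsPath p u v → G.IsPath q v u → False

/-- `G` is 2-path-bounded: every oriented path avoiding loop edges has length at most 2. -/
def TwoPathBounded : Prop :=
  ∀ (p : List G.E) (u v : G.V), G.IsPath p u v →
    (∀ e ∈ p, G.o e ≠ G.t e) → p.length ≤ 2

/-- `G` has a pair of multiple edges. -/
def HasMultipleEdges : Prop :=
  ∃ e e' : G.E, e ≠ e' ∧ G.t e = G.t e' ∧ G.o e = G.o e' ∧ G.t e ≠ G.o e

/-- `G` has a triangle. -/
def HasTriangle : Prop :=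
  ∃ a b c : G.E, G.o a = G.o b ∧ G.t b = G.o c ∧ G.t c = G.t a ∧
    G.o a ≠ G.t a ∧ G.o b ≠ G.t b ∧ G.o c ≠ G.t c

/-- `G` has no loops. -/
def NoLoops : Prop := ∀ e : G.E, G.o e ≠ G.t e

/-- Every edge occurring on either side of the relation `r` is a loop. -/
def AllLoops (r : List G.E × List G.E) : Prop :=
  (∀ e ∈ r.1, G.o e = G.t e) ∧ (∀ e ∈ r.2, G.o e = G.t e)

/-- Both sides of the relation `r` contain at least one non-loop edge. -/
def BothSidesNonLoop (r : List G.E × List G.E) : Prop :=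
  (∃ e ∈ r.1, G.o e ≠ G.t e) ∧ (∃ e ∈ r.2, G.o e ≠ G.t e)

end OrientedGraph

/-- The triploid `T(n₁, n₂, n₃, n₀, e)`. -/
def Triploid (n₁ n₂ n₃ n₀ e : ℕ) (hn₁ : 0 < n₁) (he : n₂ * (n₁ + n₃) ≤ e)
    (he₀ : 0 < e) : OrientedGraph where
  V := Fin n₀ ⊕ Fin n₁ ⊕ Fin n₂ ⊕ Fin n₃
  E := (Fin n₁ × Fin n₂) ⊕ (Fin n₂ × Fin n₃) ⊕ Fin (e - n₂ * (n₁ + n₃))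
  nonemptyV := ⟨Sum.inr (Sum.inl ⟨0, hn₁⟩)⟩
  nonemptyE := by
    by_cases h : n₂ * (n₁ + n₃) < e
    · exact ⟨Sum.inr (Sum.inr ⟨0, by omega⟩)⟩
    · have h2 : 0 < n₂ := by
        rcases Nat.eq_zero_or_pos n₂ with h0 | h0
        · exfalso; subst h0; simp at h; omega
        · exact h0
      exact ⟨Sum.inl (⟨0, hn₁⟩, ⟨0, h2⟩)⟩
  o := Sum.elim (fun p => Sum.inr (Sum.inl p.1))
        (Sum.elim (fun p => Sum.inr (Sum.inr (Sum.inl p.1)))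
          (fun _ => Sum.inr (Sum.inl ⟨0, hn₁⟩)))
  t := Sum.elim (fun p => Sum.inr (Sum.inr (Sum.inl p.2)))
        (Sum.elim (fun p => Sum.inr (Sum.inr (Sum.inr p.2)))
          (fun _ => Sum.inr (Sum.inl ⟨0, hn₁⟩)))

open Classical in
/-- `true` iff the edge is not a loop. -/
noncomputable def OrientedGraph.nl (G : OrientedGraph) (e : G.E) : Bool :=
  decide (G.o e ≠ G.t e)

open Classical in
lemma OrientedGraph.nl_iff (G : OrientedGraph) (e : G.E) :
    G.nl e = true ↔ G.o e ≠ G.t e := by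
  simp [OrientedGraph.nl]

open Classical in
/-- The canonical labeling: loops get 1, non-loops get `ofAdd 1`. -/
noncomputable def OrientedGraph.lab (G : OrientedGraph) (e : G.E) : Multiplicative ℕ :=
  if G.o e = G.t e then 1 else Multiplicative.ofAdd 1

lemma OrientedGraph.isPath_nil (G : OrientedGraph) (u v : G.V) :
    G.IsPath [] u v ↔ u = v := by
  simp [OrientedGraph.IsPath, List.Chain', List.isChain_nil]

lemma OrientedGraph.isPath_cons (G : OrientedGraph) (e : G.E) (p : List G.E)
    (u v : G.V) : G.IsPath (e :: p) u v ↔ G.o e = u ∧ G.IsPath p (G.t e) v := by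
  cases p with
  | nil =>
    simp [OrientedGraph.IsPath, eq_comm, List.Chain', List.isChain_nil, List.isChain_singleton]
  | cons f q =>
    constructor
    · rintro ⟨hc, h⟩
      rcases h with ⟨h, -⟩ | ⟨h, hu, hv⟩
      · simp at h
      · simp only [List.Chain', List.isChain_cons_cons] at hc
        refine ⟨hu.symm, hc.2, Or.inr ⟨by simp, ?_, ?_⟩⟩
        · simpa using hc.1
        · simpa [List.getLast] using hv
    · rintro ⟨ho, hc, h⟩
      rcases h with ⟨h, -⟩ | ⟨h, hu, hv⟩
      · simp at h
      · refine ⟨List.isChain_cons_cons.2 ⟨?_, hc⟩, Or.inr ⟨by simp, by simp [ho], ?_⟩⟩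
        · simpa using hu
        · simpa [List.getLast] using hv

lemma OrientedGraph.filter_isPath (G : OrientedGraph) :
    ∀ (p : List G.E) (u v : G.V), G.IsPath p u v →
      G.IsPath (p.filter G.nl) u v := by
  intro p
  induction p with
  | nil => intro u v h; simpa using h
  | cons e q ih =>
    intro u v h
    rw [G.isPath_cons] at h
    obtain ⟨ho, hp⟩ := h
    by_cases hl : G.o e = G.t e
    · have : G.nl e = false := by
        simp [OrientedGraph.nl, hl]
      rw [List.filter_cons, this]
      simp only [Bool.false_eq_true, if_false]
      have := ih (G.t e) v hp
      rwa [← hl, ho] at this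
    · have hnl : G.nl e = true := (G.nl_iff e).2 hl
      rw [List.filter_cons, hnl]
      simp only [if_true]
      exact (G.isPath_cons e _ u v).2 ⟨ho, ih (G.t e) v hp⟩

lemma OrientedGraph.labelProd_lab (G : OrientedGraph) (p : List G.E) :
    G.labelProd G.lab p = Multiplicative.ofAdd (p.countP G.nl) := by
  induction p with
  | nil => simp [OrientedGraph.labelProd]
  | cons e q ih =>
    rw [List.countP_cons]
    by_cases hl : G.o e = G.t e
    · have h1 : G.nl e = false := by simp [OrientedGraph.nl, hl]
      simp only [OrientedGraph.labelProd, List.map_cons, List.prod_cons] at ih ⊢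
      rw [ih, h1]
      simp [OrientedGraph.lab, hl]
    · have h1 : G.nl e = true := (G.nl_iff e).2 hl
      simp only [OrientedGraph.labelProd, List.map_cons, List.prod_cons] at ih ⊢
      rw [ih, h1]
      simp only [if_true]
      rw [show G.lab e = Multiplicative.ofAdd 1 from if_neg hl,
        ← ofAdd_add]
      congr 1
      omega

/-- Under the hypotheses, the canonical labeling is commutative. -/
lemma OrientedGraph.lab_comm (G : OrientedGraph) (hqa : G.QuasiAcyclic)
    (hpb : G.TwoPathBounded) (htr : ¬ G.HasTriangle) :
    G.IsCommutative G.lab := by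
  intro u v p₁ p₂ h₁ h₂
  rw [G.labelProd_lab, G.labelProd_lab]
  rw [List.countP_eq_length_filter, List.countP_eq_length_filter]
  congr 1
  set f₁ := p₁.filter G.nl with hf₁
  set f₂ := p₂.filter G.nl with hf₂
  have hp₁ : G.IsPath f₁ u v := G.filter_isPath p₁ u v h₁
  have hp₂ : G.IsPath f₂ u v := G.filter_isPath p₂ u v h₂
  have hmem : ∀ e ∈ f₁, G.o e ≠ G.t e := by
    intro e he
    exact (G.nl_iff e).1 (List.of_mem_filter he)
  have hmem₂ : ∀ e ∈ f₂, G.o e ≠ G.t e := by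
    intro e he
    exact (G.nl_iff e).1 (List.of_mem_filter he)
  by_cases huv : u = v
  · -- both filtered paths must be empty
    subst huv
    have empty : ∀ (f : List G.E), G.IsPath f u u → (∀ e ∈ f, G.o e ≠ G.t e) →
        f = [] := by
      intro f hf hm
      cases f with
      | nil => rfl
      | cons e q =>
        exfalso
        rw [G.isPath_cons] at hf
        obtain ⟨ho, hq⟩ := hf
        have hne : u ≠ G.t e := by
          intro h
          exact hm e (by simp) (ho.trans h)
        exact hqa u (G.t e) hne [e] q
          ((G.isPath_cons e [] u (G.t e)).2 ⟨ho, (G.isPath_nil _ _).2 rfl⟩) hq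
    rw [empty f₁ hp₁ hmem, empty f₂ hp₂ hmem₂]
  · -- lengths are both in {1, 2} and cannot be 1 vs 2 (no triangles)
    have hne₁ : f₁ ≠ [] := by
      intro h; exact huv ((G.isPath_nil u v).1 (h ▸ hp₁))
    have hne₂ : f₂ ≠ [] := by
      intro h; exact huv ((G.isPath_nil u v).1 (h ▸ hp₂))
    have hl₁ : f₁.length ≤ 2 := hpb f₁ u v hp₁ hmem
    have hl₂ : f₂.length ≤ 2 := hpb f₂ u v hp₂ hmem₂
    have hg₁ : 1 ≤ f₁.length := List.length_pos_iff.2 hne₁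
    have hg₂ : 1 ≤ f₂.length := List.length_pos_iff.2 hne₂
    -- key: no path of length 1 and path of length 2 between same vertices
    have key : ∀ (g₁ g₂ : List G.E), G.IsPath g₁ u v → G.IsPath g₂ u v →
        (∀ e ∈ g₁, G.o e ≠ G.t e) → (∀ e ∈ g₂, G.o e ≠ G.t e) →
        g₁.length = 1 → g₂.length = 2 → False := by
      intro g₁ g₂ hg1 hg2 hm1 hm2 hlen1 hlen2
      obtain ⟨a, rfl⟩ : ∃ a, g₁ = [a] := by
        cases g₁ with
        | nil => simp at hlen1
        | cons a q => cases q with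
          | nil => exact ⟨a, rfl⟩
          | cons b r => simp at hlen1
      obtain ⟨b, c, rfl⟩ : ∃ b c, g₂ = [b, c] := by
        cases g₂ with
        | nil => simp at hlen2
        | cons b q => cases q with
          | nil => simp at hlen2
          | cons c r => cases r with
            | nil => exact ⟨b, c, rfl⟩
            | cons d s => simp at hlen2
      rw [G.isPath_cons] at hg1 hg2
      obtain ⟨hoa, hta⟩ := hg1
      obtain ⟨hob, hrest⟩ := hg2
      rw [G.isPath_cons] at hrest
      obtain ⟨hoc, htc⟩ := hrest
      rw [G.isPath_nil] at hta htc
      exact htr ⟨a, b, c, by rw [hoa, hob], hoc.symm, htc.trans hta.symm,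
        hm1 a (by simp), hm2 b (by simp), hm2 c (by simp)⟩
    interval_cases h1 : f₁.length <;> interval_cases h2 : f₂.length
    · rfl
    · exact (key f₁ f₂ hp₁ hp₂ hmem hmem₂ h1 h2).elim
    · exact (key f₂ f₁ hp₂ hp₁ hmem₂ hmem h2 h1).elim
    · rfl

/-- Theorem: for a complete system of relations `R` of a quasi-acyclic, 2-path-bounded
graph without multiple edges and triangles, every relation lies in exactly one of
`R_L` (all edges are loops) and `R_N` (both sides contain a non-loop edge). -/
theorem relations_split (G : OrientedGraph) (hqa : G.QuasiAcyclic)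
    (hpb : G.TwoPathBounded) (hme : ¬ G.HasMultipleEdges) (htr : ¬ G.HasTriangle)
    (R : Finset (List G.E × List G.E)) (hR : G.IsComplete R) :
    ∀ r ∈ R, Xor' (G.AllLoops r) (G.BothSidesNonLoop r) := by
  intro r hr
  have hcomm : G.IsCommutative G.lab := G.lab_comm hqa hpb htr
  have heq := ((hR (Multiplicative ℕ) G.lab).1 hcomm) r hr
  rw [G.labelProd_lab, G.labelProd_lab] at heq
  have hcnt : r.1.countP G.nl = r.2.countP G.nl := by
    exact Multiplicative.ofAdd.injective heq
  have hzero : ∀ s : List G.E, s.countP G.nl = 0 ↔ ∀ e ∈ s, G.o e = G.t e := by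
    intro s
    rw [List.countP_eq_zero]
    constructor
    · intro h e he
      by_contra hc
      exact h e he ((G.nl_iff e).2 hc)
    · intro h e he hb
      exact (G.nl_iff e).1 hb (h e he)
  have hpos : ∀ s : List G.E, 0 < s.countP G.nl ↔ ∃ e ∈ s, G.o e ≠ G.t e := by
    intro s
    rw [List.countP_pos_iff]
    constructor
    · rintro ⟨e, he, hb⟩
      exact ⟨e, he, (G.nl_iff e).1 hb⟩
    · rintro ⟨e, he, hb⟩
      exact ⟨e, he, (G.nl_iff e).2 hb⟩
  rcases Nat.eq_zero_or_pos (r.1.countP G.nl) with h0 | h0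
  · left
    constructor
    · exact ⟨(hzero r.1).1 h0, (hzero r.2).1 (hcnt ▸ h0)⟩
    · rintro ⟨⟨e, he, hne⟩, -⟩
      exact hne ((hzero r.1).1 h0 e he)
  · right
    constructor
    · exact ⟨(hpos r.1).1 h0, (hpos r.2).1 (hcnt ▸ h0)⟩
    · rintro ⟨h1, -⟩
      obtain ⟨e, he, hne⟩ := (hpos r.1).1 h0
      exact hne (h1 e he)
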